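/- Let D(p) = q·(H_b(p)(1-γ) + α(H_b(β) - H_b(p*β))) with q > 0, α ∈ [0,1], β ∈ (0,1/2], γ ∈ (0,1). If γ ≤ 1 - α(1-2β), then D'(p) ≥ 0 for all p ∈ (0,1/2), and hence D(p) ≥ 0 for all p ∈ [0,1/2]. -/

import Mathlib

noncomputable def binEnt (x : ℝ) : ℝ := Real.negMulLog x + Real.negMulLog (1 - x)

noncomputable def binConv (a b : ℝ) : ℝ := a * (1 - b) + (1 - a) * b

lemma hasDerivAt_binEnt {x : ℝ} (h0 : x ≠ 0) (h1 : x ≠ 1) :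
    HasDerivAt binEnt (Real.log (1 - x) - Real.log x) x := by
  have hx1 : (1 : ℝ) - x ≠ 0 := sub_ne_zero.mpr (Ne.symm h1)
  have h2 : HasDerivAt (fun y : ℝ => Real.negMulLog (1 - y))
      ((-Real.log (1 - x) - 1) * (0 - 1)) x :=
    (Real.hasDerivAt_negMulLog hx1).comp x ((hasDerivAt_const x (1:ℝ)).sub (hasDerivAt_id x))
  have h3 := (Real.hasDerivAt_negMulLog h0).add h2
  have : HasDerivAt (fun y : ℝ => Real.negMulLog y + Real.negMulLog (1 - y))
      (Real.log (1 - x) - Real.log x) x := by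
    exact h3.congr_deriv (by ring)
  exact this

lemma continuous_binEnt : Continuous binEnt :=
  Real.continuous_negMulLog.add
    (Real.continuous_negMulLog.comp (continuous_const.sub continuous_id))

theorem D_nonneg_of_gamma_le (q α γ β : ℝ) (hq : 0 < q) (hα : α ∈ Set.Icc (0:ℝ) 1)
    (hβ : β ∈ Set.Ioc (0:ℝ) (1/2)) (hγ : γ ∈ Set.Ioo (0:ℝ) 1)
    (hcond : γ ≤ 1 - α * (1 - 2 * β))
    (D : ℝ → ℝ)
    (hD : ∀ p, D p = q * (binEnt p * (1 - γ) + α * (binEnt β - binEnt (binConv p β)))) :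
    (∀ p ∈ Set.Ioo (0:ℝ) (1/2), 0 ≤ deriv D p) ∧
    (∀ p ∈ Set.Icc (0:ℝ) (1/2), 0 ≤ D p) := by
  obtain ⟨hα0, hα1⟩ := hα
  obtain ⟨hβ0, hβ1⟩ := hβ
  obtain ⟨hγ0, hγ1⟩ := hγ
  have hDfun : D = fun p => q * (binEnt p * (1 - γ) + α * (binEnt β - binEnt (binConv p β))) :=
    funext hD
  -- derivative of D at p ∈ (0, 1/2)
  have key : ∀ p ∈ Set.Ioo (0:ℝ) (1/2),
      HasDerivAt D (q * ((Real.log (1 - p) - Real.log p) * (1 - γ)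
        - α * ((Real.log (1 - binConv p β) - Real.log (binConv p β)) * (1 - 2 * β)))) p := by
    intro p hp
    obtain ⟨hp0, hp1⟩ := hp
    have hm0 : 0 < binConv p β := by unfold binConv; nlinarith
    have hm1 : binConv p β < 1 := by unfold binConv; nlinarith
    have h1 : HasDerivAt binEnt (Real.log (1 - p) - Real.log p) p :=
      hasDerivAt_binEnt (ne_of_gt hp0) (by linarith)
    have hconv : HasDerivAt (fun p : ℝ => binConv p β) (1 - 2 * β) p := by
      have h : HasDerivAt (fun p : ℝ => p * (1 - β) + (1 - p) * β)
          (1 * (1 - β) + (0 - 1) * β) p :=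
        ((hasDerivAt_id p).mul_const (1 - β)).add
          (((hasDerivAt_const p (1:ℝ)).sub (hasDerivAt_id p)).mul_const β)
      have : HasDerivAt (fun p : ℝ => p * (1 - β) + (1 - p) * β) (1 - 2 * β) p := by
        convert h using 1; ring
      exact this
    have h2 : HasDerivAt (fun p => binEnt (binConv p β))
        ((Real.log (1 - binConv p β) - Real.log (binConv p β)) * (1 - 2 * β)) p :=
      by have := (hasDerivAt_binEnt (ne_of_gt hm0) (ne_of_lt hm1)).comp p hconv; exact this
    rw [hDfun]
    have h4 := ((h1.mul_const (1 - γ)).add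
      (((hasDerivAt_const p (binEnt β)).sub h2).const_mul α)).const_mul q
    exact h4.congr_deriv (by ring)
  -- the derivative value is nonnegative
  have hval : ∀ p ∈ Set.Ioo (0:ℝ) (1/2),
      0 ≤ q * ((Real.log (1 - p) - Real.log p) * (1 - γ)
        - α * ((Real.log (1 - binConv p β) - Real.log (binConv p β)) * (1 - 2 * β))) := by
    intro p hp
    obtain ⟨hp0, hp1⟩ := hp
    set m := binConv p β with hm
    have hmval : m = p * (1 - β) + (1 - p) * β := rfl
    have hm0 : 0 < m := by rw [hmval]; nlinarith
    have hmp : p ≤ m := by rw [hmval]; nlinarith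
    have hmh : m ≤ 1 / 2 := by rw [hmval]; nlinarith
    have hLm0 : 0 ≤ Real.log (1 - m) - Real.log m :=
      sub_nonneg.mpr (Real.log_le_log hm0 (by linarith))
    have hLmp : Real.log (1 - m) - Real.log m ≤ Real.log (1 - p) - Real.log p := by
      have h1 : Real.log (1 - m) ≤ Real.log (1 - p) :=
        Real.log_le_log (by linarith) (by linarith)
      have h2 : Real.log p ≤ Real.log m := Real.log_le_log hp0 hmp
      linarith
    have hco : α * (1 - 2 * β) ≤ 1 - γ := by linarith
    have hab : 0 ≤ α * (1 - 2 * β) := by nlinarith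
    have hmain : α * ((Real.log (1 - m) - Real.log m) * (1 - 2 * β))
        ≤ (Real.log (1 - p) - Real.log p) * (1 - γ) := by
      nlinarith [mul_le_mul_of_nonneg_right hco hLm0,
        mul_le_mul_of_nonneg_left hLmp (by linarith : (0:ℝ) ≤ 1 - γ)]
    exact mul_nonneg hq.le (by linarith)
  have part1 : ∀ p ∈ Set.Ioo (0:ℝ) (1/2), 0 ≤ deriv D p := by
    intro p hp
    rw [(key p hp).deriv]
    exact hval p hp
  refine ⟨part1, ?_⟩
  have hcont : ContinuousOn D (Set.Icc 0 (1/2)) := by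
    rw [hDfun]
    have hc : Continuous fun p : ℝ => binConv p β := by
      unfold binConv; continuity
    exact (continuous_const.mul ((continuous_binEnt.mul continuous_const).add
      (continuous_const.mul (continuous_const.sub (continuous_binEnt.comp hc))))).continuousOn
  have hmono : MonotoneOn D (Set.Icc 0 (1/2)) := by
    apply monotoneOn_of_deriv_nonneg (convex_Icc _ _) hcont
    · rw [interior_Icc]
      intro x hx
      exact (key x hx).differentiableAt.differentiableWithinAt
    · rw [interior_Icc]
      exact part1
  have hD0 : D 0 = 0 := by
    have : binConv 0 β = β := by unfold binConv; ring
    rw [hD 0, this]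
    have : binEnt 0 = 0 := by
      unfold binEnt
      simp [Real.negMulLog_zero, Real.negMulLog_one]
    rw [this]; ring
  intro p hp
  have h0mem : (0:ℝ) ∈ Set.Icc (0:ℝ) (1/2) := ⟨le_refl _, by norm_num⟩
  have := hmono h0mem hp hp.1
  linarith [hD0 ▸ this]
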